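/- Let T : X → Y be a lattice homomorphism between two Archimedean vector lattices X and Y, let x_1,…,x_m ∈ X for some m ∈ ℕ, and set e = ⋁_{j=1}^m |x_j| ∈ X₊. Then ‖Tx‖_{Te} = ‖x‖_e for every x ∈ I_e if and only if the restriction of T to I_e is injective. -/

import Mathlib

/-- Membership in the order ideal `I_e` generated by `e`:
`a ∈ I_e` iff `|a| ≤ c • e` for some `c ∈ [0,∞)`. -/
def memIdeal {X : Type*} [Lattice X] [AddCommGroup X] [Module ℝ X] (e a : X) : Prop :=
  ∃ c : ℝ, 0 ≤ c ∧ |a| ≤ c • e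

/-- The seminorm `‖a‖_e = inf { c ∈ [0,∞) : |a| ≤ c • e }` on `I_e`. -/
noncomputable def eNorm {X : Type*} [Lattice X] [AddCommGroup X] [Module ℝ X] (e a : X) : ℝ :=
  sInf { c : ℝ | 0 ≤ c ∧ |a| ≤ c • e }

section aux

variable {X : Type*} [Lattice X] [AddCommGroup X] [Module ℝ X]
    [CovariantClass X X (· + ·) (· ≤ ·)] [PosSMulMono ℝ X]

lemma smul_mono_scalar {c d : ℝ} {e : X} (hcd : c ≤ d) (he : 0 ≤ e) : c • e ≤ d • e := by
  have h : (0:X) ≤ (d - c) • e := by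
    have := smul_le_smul_of_nonneg_left he (sub_nonneg.2 hcd)
    simpa using this
  have : c • e + 0 ≤ c • e + (d - c) • e := by
    exact add_le_add le_rfl h
  simpa [← add_smul] using this

lemma eNorm_nonneg_of_mem {e a : X} (h : memIdeal e a) : 0 ≤ eNorm e a := by
  apply Real.sInf_nonneg
  rintro c ⟨hc, -⟩; exact hc

/-- The infimum defining `eNorm` is attained in an Archimedean vector lattice. -/
lemma eNorm_attained (harch : ∀ x y : X, (∀ n : ℕ, n • x ≤ y) → x ≤ 0)
    {e a : X} (he : 0 ≤ e) (h : memIdeal e a) : |a| ≤ eNorm e a • e := by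
  set S : Set ℝ := { c : ℝ | 0 ≤ c ∧ |a| ≤ c • e } with hS
  obtain ⟨c0, hc0, hle0⟩ := h
  have hne : S.Nonempty := ⟨c0, hc0, hle0⟩
  have hbdd : BddBelow S := ⟨0, fun c hc => hc.1⟩
  set l := eNorm e a with hl
  have hkey : ∀ ε : ℝ, 0 < ε → |a| - l • e ≤ ε • e := by
    intro ε hε
    have hls : l = sInf S := rfl
    have hlt : sInf S < l + ε := by rw [← hls]; linarith
    obtain ⟨c, hcS, hclt⟩ := (csInf_lt_iff hbdd hne).mp hlt
    have h1 : |a| ≤ (l + ε) • e := hcS.2.trans (smul_mono_scalar hclt.le he)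
    have := sub_le_sub_right h1 (l • e)
    calc |a| - l • e ≤ (l + ε) • e - l • e := this
      _ = ε • e := by rw [add_smul]; abel
  have harch' : ∀ n : ℕ, n • (|a| - l • e) ≤ e := by
    intro n
    rcases Nat.eq_zero_or_pos n with rfl | hn
    · simpa using he
    · have hpos : (0:ℝ) < (n:ℝ)⁻¹ := by positivity
      have h1 := hkey _ hpos
      have h2 := smul_le_smul_of_nonneg_left h1 (le_of_lt (by positivity : (0:ℝ) < (n:ℝ)))
      rw [smul_smul, mul_inv_cancel₀ (by positivity : (n:ℝ) ≠ 0), one_smul] at h2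
      simpa [Nat.cast_smul_eq_nsmul] using h2
  exact sub_nonpos.mp (harch _ _ harch')

lemma abs_eq_zero_of_le_zero {a : X} (h : |a| ≤ 0) : a = 0 := by
  have h1 : a ≤ 0 := (le_abs_self a).trans h
  have h2 : -a ≤ 0 := (neg_le_abs a).trans h
  have := neg_nonpos.mp h2
  exact le_antisymm h1 this

end aux

/-- If `T : X → Y` is a lattice homomorphism between Archimedean vector
lattices, `x_0, …, x_m ∈ X` and `e = ⋁_j |x_j|`, then `‖Tx‖_{Te} = ‖x‖_e` for every
`x ∈ I_e` if and only if the restriction of `T` to `I_e` is injective. -/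
theorem lattice_hom_eNorm_isometry_iff_injective_on_ideal
    {X Y : Type*}
    [Lattice X] [AddCommGroup X] [Module ℝ X]
    [CovariantClass X X (· + ·) (· ≤ ·)] [PosSMulMono ℝ X]
    [Lattice Y] [AddCommGroup Y] [Module ℝ Y]
    [CovariantClass Y Y (· + ·) (· ≤ ·)] [PosSMulMono ℝ Y]
    (harchX : ∀ x y : X, (∀ n : ℕ, n • x ≤ y) → x ≤ 0)
    (harchY : ∀ x y : Y, (∀ n : ℕ, n • x ≤ y) → x ≤ 0)
    (T : X →ₗ[ℝ] Y) (hT : ∀ a b : X, T (a ⊔ b) = T a ⊔ T b)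
    {m : ℕ} (x : Fin (m + 1) → X) (e : X)
    (he : e = Finset.univ.sup' ⟨0, Finset.mem_univ 0⟩ fun j => |x j|) :
    (∀ a : X, memIdeal e a → eNorm (T e) (T a) = eNorm e a) ↔
      (∀ a b : X, memIdeal e a → memIdeal e b → T a = T b → a = b) := by
  -- basic facts
  have he0 : (0:X) ≤ e := by
    rw [he]
    exact le_trans (abs_nonneg (x 0))
      (Finset.le_sup' (fun j => |x j|) (Finset.mem_univ (0 : Fin (m + 1))))
  have hTmono : ∀ a b : X, a ≤ b → T a ≤ T b := by
    intro a b hab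
    have : T (a ⊔ b) = T a ⊔ T b := hT a b
    rw [sup_eq_right.mpr hab] at this
    exact le_sup_left.trans this.ge
  have hTabs : ∀ v : X, T |v| = |T v| := by
    intro v
    have : |v| = v ⊔ -v := rfl
    rw [this, hT, map_neg]; rfl
  have hTe0 : (0:Y) ≤ T e := by simpa using hTmono 0 e he0
  -- image membership
  have hmem : ∀ a : X, memIdeal e a → memIdeal (T e) (T a) := by
    rintro a ⟨c, hc, hle⟩
    refine ⟨c, hc, ?_⟩
    have := hTmono _ _ hle
    rwa [hTabs, map_smul] at this
  constructor
  · -- isometry → injective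
    intro hiso a b ha hb hab
    have hz : memIdeal e (a - b) := by
      obtain ⟨c, hc, hlc⟩ := ha
      obtain ⟨d, hd, hld⟩ := hb
      refine ⟨c + d, by linarith, ?_⟩
      calc |a - b| = |a + -b| := by rw [sub_eq_add_neg]
        _ ≤ |a| + |-b| := abs_add_le _ _
        _ = |a| + |b| := by rw [abs_neg]
        _ ≤ c • e + d • e := add_le_add hlc hld
        _ = (c + d) • e := (add_smul c d e).symm
    have hTz : T (a - b) = 0 := by rw [map_sub, hab, sub_self]
    have h0 : eNorm (T e) (T (a - b)) = 0 := by
      rw [hTz]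
      have h0mem : (0:ℝ) ∈ { c : ℝ | 0 ≤ c ∧ |(0:Y)| ≤ c • T e } := by
        refine ⟨le_refl 0, ?_⟩
        simp [abs]
      apply le_antisymm
      · exact csInf_le ⟨0, fun c hc => hc.1⟩ h0mem
      · exact Real.sInf_nonneg (fun c hc => hc.1)
    have hz0 : eNorm e (a - b) = 0 := by rw [← hiso _ hz, h0]
    have := eNorm_attained harchX he0 hz
    rw [hz0, zero_smul] at this
    exact sub_eq_zero.mp (abs_eq_zero_of_le_zero this)
  · -- injective → isometry
    intro hinj a ha
    set l := eNorm (T e) (T a) with hl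
    have hmemTa := hmem a ha
    have hl0 : 0 ≤ l := eNorm_nonneg_of_mem hmemTa
    apply le_antisymm
    · -- eNorm (T e) (T a) ≤ eNorm e a : subset of defining sets
      apply csInf_le_csInf ⟨0, fun c hc => hc.1⟩
      · obtain ⟨c, hc, hlc⟩ := ha; exact ⟨c, hc, hlc⟩
      · rintro c ⟨hc, hlc⟩
        refine ⟨hc, ?_⟩
        have := hTmono _ _ hlc
        rwa [hTabs, map_smul] at this
    · -- eNorm e a ≤ l, via injectivity
      have hattY : |T a| ≤ l • T e := eNorm_attained harchY hTe0 hmemTa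
      set b := (|a| - l • e) ⊔ 0 with hb
      have hTb : T b = 0 := by
        have : T b = T (|a| - l • e) ⊔ T 0 := hT _ _
        rw [map_zero, map_sub, hTabs, map_smul] at this
        rw [this, sup_eq_right.mpr (sub_nonpos.mpr hattY)]
      have hb0 : (0:X) ≤ b := le_sup_right
      have hle0' : (0:X) ≤ l • e := by
        have := smul_le_smul_of_nonneg_left he0 hl0
        simpa using this
      have hble : b ≤ |a| := by
        apply sup_le _ (abs_nonneg a)
        exact sub_le_self _ hle0'
      have hbabs : |b| = b := sup_eq_left.mpr ((neg_nonpos.mpr hb0).trans hb0)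
      have hbmem : memIdeal e b := by
        obtain ⟨c, hc, hlc⟩ := ha
        exact ⟨c, hc, by rw [hbabs]; exact hble.trans hlc⟩
      have h0mem : memIdeal e (0:X) := ⟨0, le_refl 0, by simp [abs]⟩
      have hbz : b = 0 := hinj b 0 hbmem h0mem (by rw [hTb, map_zero])
      have : |a| - l • e ≤ 0 := by
        have := le_sup_left (a := |a| - l • e) (b := (0:X))
        rw [← hb, hbz] at this; exact this
      have hlmem : l ∈ { c : ℝ | 0 ≤ c ∧ |a| ≤ c • e } := ⟨hl0, sub_nonpos.mp this⟩
      exact csInf_le ⟨0, fun c hc => hc.1⟩ hlmem
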